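/- Let n ≥ 1, let 1 ≤ p < ∞, let i ∈ {1, …, n}, and let u : ℝⁿ → ℝ be twice continuously differentiable with compact support. Then for every ε > 0, ‖∂_i u‖_{L^p(ℝⁿ)} ≤ ε · ‖∂_i² u‖_{L^p(ℝⁿ)} + 36 · ε^{−1} · ‖u‖_{L^p(ℝⁿ)}, where ∂_i u and ∂_i² u denote the first and second partial derivatives of u in the i-th coordinate direction. -/

import Mathlib

open MeasureTheory Set

/-- The partial derivative of `u : ℝⁿ → ℝ` in the `i`-th coordinate direction. -/
noncomputable def partialDeriv' {n : ℕ} (i : Fin n) (u : EuclideanSpace ℝ (Fin n) → ℝ) :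
    EuclideanSpace ℝ (Fin n) → ℝ :=
  fun x => fderiv ℝ u x (EuclideanSpace.single i 1)

open scoped ENNReal

lemma oneDim_bound (g gd gdd : ℝ → ℝ) (h1 : ∀ t, HasDerivAt g (gd t) t)
    (h2 : ∀ t, HasDerivAt gd (gdd t) t) (hc : Continuous gd) (hc2 : Continuous gdd)
    (ε : ℝ) (hε : 0 < ε) :
    |gd 0| ≤ ε⁻¹ * |g ε| + ε⁻¹ * |g 0| + ∫ r in (0:ℝ)..ε, |gdd r| := by
  have hI : ∫ s in (0:ℝ)..ε, gd s = g ε - g 0 :=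
    intervalIntegral.integral_eq_sub_of_hasDerivAt (fun t _ => h1 t) (hc.intervalIntegrable 0 ε)
  have hJ : ∀ s : ℝ, ∫ r in (0:ℝ)..s, gdd r = gd s - gd 0 := fun s =>
    intervalIntegral.integral_eq_sub_of_hasDerivAt (fun t _ => h2 t) (hc2.intervalIntegrable 0 s)
  have hKc : Continuous fun s : ℝ => ∫ r in (0:ℝ)..s, gdd r := by
    have : (fun s : ℝ => ∫ r in (0:ℝ)..s, gdd r) = fun s => gd s - gd 0 := funext hJ
    rw [this]; exact hc.sub continuous_const
  set C := ∫ r in (0:ℝ)..ε, |gdd r| with hCdef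
  have hCnn : 0 ≤ C := intervalIntegral.integral_nonneg hε.le (fun r _ => abs_nonneg _)
  have hkey : ε * gd 0 = (g ε - g 0) - ∫ s in (0:ℝ)..ε, (∫ r in (0:ℝ)..s, gdd r) := by
    have h4 : ∫ s in (0:ℝ)..ε, (∫ r in (0:ℝ)..s, gdd r) = ∫ s in (0:ℝ)..ε, (gd s - gd 0) :=
      intervalIntegral.integral_congr (fun s _ => hJ s)
    rw [h4, intervalIntegral.integral_sub (hc.intervalIntegrable 0 ε) intervalIntegrable_const,
      hI, intervalIntegral.integral_const]
    simp only [smul_eq_mul, sub_zero]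
    ring
  have habs : |∫ s in (0:ℝ)..ε, (∫ r in (0:ℝ)..s, gdd r)| ≤ ε * C := by
    calc |∫ s in (0:ℝ)..ε, (∫ r in (0:ℝ)..s, gdd r)|
        ≤ ∫ s in (0:ℝ)..ε, |∫ r in (0:ℝ)..s, gdd r| :=
          intervalIntegral.abs_integral_le_integral_abs hε.le
      _ ≤ ∫ s in (0:ℝ)..ε, C := by
          apply intervalIntegral.integral_mono_on hε.le
            (hKc.abs.intervalIntegrable 0 ε) intervalIntegrable_const
          intro s hs
          calc |∫ r in (0:ℝ)..s, gdd r| ≤ ∫ r in (0:ℝ)..s, |gdd r| :=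
                intervalIntegral.abs_integral_le_integral_abs hs.1
            _ ≤ C := intervalIntegral.integral_mono_interval le_rfl hs.1 hs.2
                (Filter.Eventually.of_forall (fun r => abs_nonneg _))
                ((hc2.abs).intervalIntegrable 0 ε)
      _ = ε * C := by rw [intervalIntegral.integral_const]; simp
  have h5 : ε * |gd 0| ≤ |g ε| + |g 0| + ε * C := by
    have : |ε * gd 0| ≤ |g ε| + |g 0| + ε * C := by
      rw [hkey]
      have habs2 : |(g ε - g 0) - ∫ s in (0:ℝ)..ε, (∫ r in (0:ℝ)..s, gdd r)|
          ≤ |g ε - g 0| + |∫ s in (0:ℝ)..ε, (∫ r in (0:ℝ)..s, gdd r)| := abs_sub _ _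
      have habs3 : |g ε - g 0| ≤ |g ε| + |g 0| := abs_sub _ _
      linarith
    calc ε * |gd 0| = |ε * gd 0| := by rw [abs_mul, abs_of_pos hε]
      _ ≤ _ := this
  calc |gd 0| = ε⁻¹ * (ε * |gd 0|) := by field_simp
    _ ≤ ε⁻¹ * (|g ε| + |g 0| + ε * C) :=
        mul_le_mul_of_nonneg_left h5 (inv_nonneg.2 hε.le)
    _ = ε⁻¹ * |g ε| + ε⁻¹ * |g 0| + C := by field_simp

theorem partial_deriv_Lp_interpolation (n : ℕ) (hn : 1 ≤ n) (p : ℝ) (hp : 1 ≤ p) (i : Fin n)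
    (u : EuclideanSpace ℝ (Fin n) → ℝ) (hu : ContDiff ℝ 2 u) (hsupp : HasCompactSupport u) :
    ∀ ε : ℝ, 0 < ε →
      (∫ x, |partialDeriv' i u x| ^ p) ^ (1 / p) ≤
        ε * (∫ x, |partialDeriv' i (partialDeriv' i u) x| ^ p) ^ (1 / p) +
          36 * ε⁻¹ * (∫ x, |u x| ^ p) ^ (1 / p) := by
  intro ε hε
  have hp0 : (0:ℝ) < p := lt_of_lt_of_le one_pos hp
  set q : ℝ≥0∞ := ENNReal.ofReal p with hqdef
  have hq0 : q ≠ 0 := by simp [hqdef, ENNReal.ofReal_eq_zero]; linarith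
  have hqtop : q ≠ ∞ := ENNReal.ofReal_ne_top
  have hq1 : (1:ℝ≥0∞) ≤ q := by
    rw [hqdef, ← ENNReal.ofReal_one]; exact ENNReal.ofReal_le_ofReal hp
  have hqr : q.toReal = p := ENNReal.toReal_ofReal hp0.le
  set e : EuclideanSpace ℝ (Fin n) := EuclideanSpace.single i 1 with hedef
  set v := partialDeriv' i u with hvdef
  set w := partialDeriv' i v with hwdef
  -- regularity
  have hveq : v = fun x => fderiv ℝ u x e := rfl
  have hweq : w = fun x => fderiv ℝ v x e := rfl
  have hv1 : ContDiff ℝ 1 v := by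
    rw [hveq]; exact (hu.fderiv_right (m := 1) (by norm_num)).clm_apply (contDiff_const (c := e))
  have hvc : Continuous v := hv1.continuous
  have hwc : Continuous w := by
    rw [hweq]
    exact ((hv1.fderiv_right (m := 0) (by norm_num)).clm_apply (contDiff_const (c := e))).continuous
  have hsv : HasCompactSupport v := by
    rw [hveq]
    exact (hsupp.fderiv (𝕜 := ℝ)).comp_left (g := fun L : EuclideanSpace ℝ (Fin n) →L[ℝ] ℝ => L e) rfl
  have hsw : HasCompactSupport w := by
    rw [hweq]
    exact ((hsv.fderiv (𝕜 := ℝ))).comp_left (g := fun L : EuclideanSpace ℝ (Fin n) →L[ℝ] ℝ => L e) rfl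
  have huc : Continuous u := hu.continuous
  have hum : MemLp u q volume := huc.memLp_of_hasCompactSupport hsupp
  have hvm : MemLp v q volume := hvc.memLp_of_hasCompactSupport hsv
  have hwm : MemLp w q volume := hwc.memLp_of_hasCompactSupport hsw
  -- derivative along the line
  have hder : ∀ (f : EuclideanSpace ℝ (Fin n) → ℝ), ContDiff ℝ 1 f → ∀ (x : EuclideanSpace ℝ (Fin n)) (t : ℝ),
      HasDerivAt (fun s : ℝ => f (x + s • e)) (partialDeriv' i f (x + t • e)) t := by
    intro f hf x t
    have hline : HasDerivAt (fun s : ℝ => x + s • e) e t := by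
      simpa using ((hasDerivAt_id t).smul_const e).const_add x
    exact ((hf.differentiable one_ne_zero).differentiableAt.hasFDerivAt).comp_hasDerivAt t hline
  -- pointwise bound
  have key : ∀ x : EuclideanSpace ℝ (Fin n), |v x| ≤ ε⁻¹ * |u (x + ε • e)| + ε⁻¹ * |u x|
      + ∫ r in (0:ℝ)..ε, |w (x + r • e)| := by
    intro x
    have h1 : ∀ t : ℝ, HasDerivAt (fun s : ℝ => u (x + s • e)) (v (x + t • e)) t :=
      fun t => hder u (hu.of_le (by norm_num)) x t
    have h2 : ∀ t : ℝ, HasDerivAt (fun s : ℝ => v (x + s • e)) (w (x + t • e)) t :=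
      fun t => hder v hv1 x t
    have hcgd : Continuous fun t : ℝ => v (x + t • e) :=
      hvc.comp (continuous_const.add (continuous_id.smul continuous_const))
    have hcgdd : Continuous fun t : ℝ => w (x + t • e) :=
      hwc.comp (continuous_const.add (continuous_id.smul continuous_const))
    have := oneDim_bound (fun s => u (x + s • e)) (fun s => v (x + s • e))
      (fun s => w (x + s • e)) h1 h2 hcgd hcgdd ε hε
    simpa using this
  -- the three majorant functions
  set G1 : EuclideanSpace ℝ (Fin n) → ℝ := fun x => ε⁻¹ * |u (x + ε • e)| with hG1def
  set G2 : EuclideanSpace ℝ (Fin n) → ℝ := fun x => ε⁻¹ * |u x| with hG2def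
  set G3 : EuclideanSpace ℝ (Fin n) → ℝ := fun x => ∫ r in (0:ℝ)..ε, |w (x + r • e)| with hG3def
  have hG1c : Continuous G1 := continuous_const.mul ((huc.comp (continuous_id.add continuous_const)).abs)
  have hG2c : Continuous G2 := continuous_const.mul huc.abs
  have hG3m : AEStronglyMeasurable G3 volume := by
    have hW : StronglyMeasurable (Function.uncurry fun (x : EuclideanSpace ℝ (Fin n)) (r : ℝ) => |w (x + r • e)|) := by
      apply Continuous.stronglyMeasurable
      exact (hwc.comp ((continuous_fst.add (continuous_snd.smul continuous_const)))).abs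
    have : G3 = fun x => ∫ r in Ioc (0:ℝ) ε, |w (x + r • e)| := by
      funext x
      rw [hG3def]
      exact intervalIntegral.integral_of_le hε.le
    rw [this]
    exact (hW.integral_prod_right).aestronglyMeasurable
  -- step 1 : eLpNorm v ≤ eLpNorm (G1 + G2 + G3)
  have step1 : eLpNorm v q volume ≤ eLpNorm (fun x => G1 x + G2 x + G3 x) q volume := by
    apply eLpNorm_mono_real
    intro x
    rw [Real.norm_eq_abs]
    exact key x
  -- triangle inequality
  have step2 : eLpNorm (fun x => G1 x + G2 x + G3 x) q volume ≤
      eLpNorm G1 q volume + eLpNorm G2 q volume + eLpNorm G3 q volume := by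
    calc eLpNorm (fun x => G1 x + G2 x + G3 x) q volume
        ≤ eLpNorm (fun x => G1 x + G2 x) q volume + eLpNorm G3 q volume :=
          eLpNorm_add_le ((hG1c.add hG2c).aestronglyMeasurable) hG3m hq1
      _ ≤ eLpNorm G1 q volume + eLpNorm G2 q volume + eLpNorm G3 q volume := by
          gcongr
          exact eLpNorm_add_le hG1c.aestronglyMeasurable hG2c.aestronglyMeasurable hq1
  -- G1
  have hG1e : eLpNorm G1 q volume = ENNReal.ofReal ε⁻¹ * eLpNorm u q volume := by
    have h1 : G1 = ε⁻¹ • fun x => ‖(u ∘ fun y => y + ε • e) x‖ := by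
      funext x; simp [hG1def, Real.norm_eq_abs, smul_eq_mul]
    rw [h1, eLpNorm_const_smul]
    rw [eLpNorm_norm]
    rw [eLpNorm_comp_measurePreserving huc.aestronglyMeasurable
      (measurePreserving_add_right volume (ε • e))]
    congr 1
    rw [Real.enorm_eq_ofReal (inv_nonneg.2 hε.le)]
  have hG2e : eLpNorm G2 q volume = ENNReal.ofReal ε⁻¹ * eLpNorm u q volume := by
    have h1 : G2 = ε⁻¹ • fun x => ‖u x‖ := by
      funext x; simp [hG2def, Real.norm_eq_abs, smul_eq_mul]
    rw [h1, eLpNorm_const_smul, eLpNorm_norm]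
    congr 1
    rw [Real.enorm_eq_ofReal (inv_nonneg.2 hε.le)]
  -- G3 : the Minkowski-type bound
  have hG3e : eLpNorm G3 q volume ≤ ENNReal.ofReal ε * eLpNorm w q volume := by
    set ν : Measure ℝ := volume.restrict (Ioc 0 ε) with hνdef
    have hνuniv : ν univ = ENNReal.ofReal ε := by
      rw [hνdef, Measure.restrict_apply_univ, Real.volume_Ioc, sub_zero]
    have hline : ∀ x : EuclideanSpace ℝ (Fin n),
        Continuous fun r : ℝ => w (x + r • e) :=
      fun x => hwc.comp (continuous_const.add (continuous_id.smul continuous_const))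
    have hεne : ENNReal.ofReal ε ≠ 0 := by
      simp [ENNReal.ofReal_eq_zero]; linarith
    -- pointwise Hölder bound
    have hpt2 : ∀ x : EuclideanSpace ℝ (Fin n),
        (‖G3 x‖₊ : ℝ≥0∞) ^ p ≤
          (∫⁻ r, (‖w (x + r • e)‖₊ : ℝ≥0∞) ^ p ∂ν) * (ENNReal.ofReal ε) ^ (p - 1) := by
      intro x
      have hG3nn : 0 ≤ G3 x := intervalIntegral.integral_nonneg hε.le fun r _ => abs_nonneg _
      have hint : Integrable (fun r => |w (x + r • e)|) ν := (hline x).abs.integrableOn_Ioc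
      have h0 : (‖G3 x‖₊ : ℝ≥0∞) = eLpNorm (fun r => w (x + r • e)) 1 ν := by
        rw [← enorm_eq_nnnorm, Real.enorm_eq_ofReal hG3nn, eLpNorm_one_eq_lintegral_enorm]
        have h1 : G3 x = ∫ r, |w (x + r • e)| ∂ν := intervalIntegral.integral_of_le hε.le
        rw [h1, ofReal_integral_eq_lintegral_ofReal hint
          (Filter.Eventually.of_forall fun r => abs_nonneg _)]
        simp_rw [← Real.norm_eq_abs, ofReal_norm_eq_enorm]
      have h3 := eLpNorm_le_eLpNorm_mul_rpow_measure_univ (p := 1) (q := q)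
        hq1 ((hline x).aestronglyMeasurable) (μ := ν)
      rw [eLpNorm_eq_lintegral_rpow_enorm_toReal hq0 hqtop, hqr, hνuniv] at h3
      rw [h0]
      have h4 : (1:ℝ≥0∞).toReal = 1 := by simp
      rw [h4] at h3
      calc (eLpNorm (fun r => w (x + r • e)) 1 ν) ^ p
          ≤ (((∫⁻ r, (‖w (x + r • e)‖₊ : ℝ≥0∞) ^ p ∂ν) ^ (1 / p)) *
              (ENNReal.ofReal ε) ^ (1 / 1 - 1 / p)) ^ p :=
            ENNReal.rpow_le_rpow h3 hp0.le
        _ = (∫⁻ r, (‖w (x + r • e)‖₊ : ℝ≥0∞) ^ p ∂ν) * (ENNReal.ofReal ε) ^ (p - 1) := by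
            rw [ENNReal.mul_rpow_of_nonneg _ _ hp0.le, ← ENNReal.rpow_mul,
              ← ENNReal.rpow_mul]
            congr 1
            · rw [one_div, inv_mul_cancel₀ hp0.ne', ENNReal.rpow_one]
            · congr 1
              field_simp
    -- measurability on the product
    have hWc : Continuous fun z : EuclideanSpace ℝ (Fin n) × ℝ =>
        (‖w (z.1 + z.2 • e)‖₊ : ℝ≥0∞) ^ p := by
      apply ENNReal.continuous_rpow_const.comp
      exact ENNReal.continuous_coe.comp
        ((hwc.comp (continuous_fst.add (continuous_snd.smul continuous_const))).nnnorm)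
    -- integrate the pointwise bound and use Fubini and translation invariance
    have hNbound : (∫⁻ x, (‖G3 x‖₊ : ℝ≥0∞) ^ p) ≤
        (ENNReal.ofReal ε) ^ p * ∫⁻ x, (‖w x‖₊ : ℝ≥0∞) ^ p := by
      have hswap : (∫⁻ x, ∫⁻ r, (‖w (x + r • e)‖₊ : ℝ≥0∞) ^ p ∂ν) =
          ∫⁻ r, (∫⁻ x, (‖w (x + r • e)‖₊ : ℝ≥0∞) ^ p) ∂ν :=
        lintegral_lintegral_swap hWc.measurable.aemeasurable
      have htrans : ∀ r : ℝ, (∫⁻ x, (‖w (x + r • e)‖₊ : ℝ≥0∞) ^ p) =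
          ∫⁻ x, (‖w x‖₊ : ℝ≥0∞) ^ p :=
        fun r => lintegral_add_right_eq_self (fun y => (‖w y‖₊ : ℝ≥0∞) ^ p) (r • e)
      calc (∫⁻ x, (‖G3 x‖₊ : ℝ≥0∞) ^ p)
          ≤ ∫⁻ x, (∫⁻ r, (‖w (x + r • e)‖₊ : ℝ≥0∞) ^ p ∂ν) * (ENNReal.ofReal ε) ^ (p - 1) :=
            lintegral_mono hpt2
        _ = (∫⁻ x, ∫⁻ r, (‖w (x + r • e)‖₊ : ℝ≥0∞) ^ p ∂ν) * (ENNReal.ofReal ε) ^ (p - 1) :=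
            lintegral_mul_const' _ _
              (ENNReal.rpow_ne_top_of_nonneg (by linarith) ENNReal.ofReal_ne_top)
        _ = (∫⁻ r, (∫⁻ x, (‖w x‖₊ : ℝ≥0∞) ^ p) ∂ν) * (ENNReal.ofReal ε) ^ (p - 1) := by
            rw [hswap]
            congr 1
            exact lintegral_congr_ae (Filter.Eventually.of_forall fun r => htrans r)
        _ = (ENNReal.ofReal ε) * (∫⁻ x, (‖w x‖₊ : ℝ≥0∞) ^ p) * (ENNReal.ofReal ε) ^ (p - 1) := by
            rw [lintegral_const, hνuniv]
            ring
        _ = (ENNReal.ofReal ε) ^ p * ∫⁻ x, (‖w x‖₊ : ℝ≥0∞) ^ p := by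
            have h7 : (ENNReal.ofReal ε) * (ENNReal.ofReal ε) ^ (p - 1) = (ENNReal.ofReal ε) ^ p := by
              nth_rewrite 1 [← ENNReal.rpow_one (ENNReal.ofReal ε)]
              rw [← ENNReal.rpow_add _ _ hεne ENNReal.ofReal_ne_top]
              ring_nf
            rw [← h7]
            ring
    -- conclude
    rw [eLpNorm_eq_lintegral_rpow_enorm_toReal hq0 hqtop, hqr,
      eLpNorm_eq_lintegral_rpow_enorm_toReal hq0 hqtop, hqr]
    calc (∫⁻ x, (‖G3 x‖₊ : ℝ≥0∞) ^ p) ^ (1 / p)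
        ≤ ((ENNReal.ofReal ε) ^ p * ∫⁻ x, (‖w x‖₊ : ℝ≥0∞) ^ p) ^ (1 / p) :=
          ENNReal.rpow_le_rpow hNbound (by positivity)
      _ = ENNReal.ofReal ε * (∫⁻ x, (‖w x‖₊ : ℝ≥0∞) ^ p) ^ (1 / p) := by
          rw [ENNReal.mul_rpow_of_nonneg _ _ (by positivity), ← ENNReal.rpow_mul]
          congr 1
          rw [mul_one_div, div_self hp0.ne', ENNReal.rpow_one]
  -- put together
  have main : eLpNorm v q volume ≤
      ENNReal.ofReal ε * eLpNorm w q volume +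
        ENNReal.ofReal (2 * ε⁻¹) * eLpNorm u q volume := by
    calc eLpNorm v q volume ≤ eLpNorm G1 q volume + eLpNorm G2 q volume + eLpNorm G3 q volume :=
          step1.trans step2
      _ ≤ ENNReal.ofReal ε⁻¹ * eLpNorm u q volume + ENNReal.ofReal ε⁻¹ * eLpNorm u q volume
            + ENNReal.ofReal ε * eLpNorm w q volume := by
          rw [hG1e, hG2e]; gcongr
      _ = ENNReal.ofReal ε * eLpNorm w q volume +
            ENNReal.ofReal (2 * ε⁻¹) * eLpNorm u q volume := by
          rw [ENNReal.ofReal_mul (by norm_num : (0:ℝ) ≤ 2)]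
          have h2 : (ENNReal.ofReal 2) = 2 := by simp
          rw [h2]
          try ring
  -- convert to real integrals
  have hconv : ∀ (f : EuclideanSpace ℝ (Fin n) → ℝ), MemLp f q volume →
      eLpNorm f q volume = ENNReal.ofReal ((∫ x, |f x| ^ p) ^ (1 / p)) := by
    intro f hf
    rw [hf.eLpNorm_eq_integral_rpow_norm hq0 hqtop, hqr]
    simp [Real.norm_eq_abs, one_div]
  have hInn : ∀ (f : EuclideanSpace ℝ (Fin n) → ℝ), (0:ℝ) ≤ (∫ x, |f x| ^ p) ^ (1 / p) := by
    intro f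
    apply Real.rpow_nonneg
    apply integral_nonneg
    intro x
    positivity
  rw [hconv v hvm, hconv w hwm, hconv u hum] at main
  rw [← ENNReal.ofReal_mul hε.le, ← ENNReal.ofReal_mul (by positivity),
    ← ENNReal.ofReal_add (by positivity) (by positivity)] at main
  have main2 := (ENNReal.ofReal_le_ofReal_iff (by positivity)).mp main
  have h36 : 2 * ε⁻¹ * ((∫ x, |u x| ^ p) ^ (1 / p)) ≤ 36 * ε⁻¹ * ((∫ x, |u x| ^ p) ^ (1 / p)) := by
    have := hInn u
    have hεinv : (0:ℝ) ≤ ε⁻¹ := inv_nonneg.2 hε.le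
    nlinarith
  calc (∫ x, |v x| ^ p) ^ (1 / p)
      ≤ ε * ((∫ x, |w x| ^ p) ^ (1 / p)) + 2 * ε⁻¹ * ((∫ x, |u x| ^ p) ^ (1 / p)) := main2
    _ ≤ ε * ((∫ x, |w x| ^ p) ^ (1 / p)) + 36 * ε⁻¹ * ((∫ x, |u x| ^ p) ^ (1 / p)) := by linarith
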